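/- Suppose Q = s( n⊗n − (1/3)Id + r( m⊗m − (1/3)Id ) ) with s ≥ 0, r ∈ [0,1] and (n, m) an orthonormal pair in ℝ³. Then |Q|² = (2/3) s² (r² − r + 1); if moreover Q ≠ 0, then β(Q) = 27 r² (1 − r)² / (4 (r² − r + 1)³). In particular, s ≥ √(3/2) |Q|. -/

import Mathlib

open Matrix

noncomputable section

abbrev M3 : Type := Matrix (Fin 3) (Fin 3) ℝ

/-- The Frobenius norm |Q| = (∑ᵢⱼ Qᵢⱼ²)^{1/2}. -/
def frob (Q : M3) : ℝ := Real.sqrt (∑ i, ∑ j, (Q i j) ^ 2)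

/-- The biaxiality parameter β(Q) = 1 − 6 (tr Q³)² / (tr Q²)³. -/
def beta (Q : M3) : ℝ := 1 - 6 * ((Q * Q * Q).trace) ^ 2 / ((Q * Q).trace) ^ 3

/-- If Q = s( n⊗n − (1/3)Id + r( m⊗m − (1/3)Id ) ) with s ≥ 0, r ∈ [0,1] and (n, m)
orthonormal, then |Q|² = (2/3)s²(r² − r + 1); if moreover Q ≠ 0 then
β(Q) = 27 r² (1 − r)² / (4 (r² − r + 1)³); and in particular s ≥ √(3/2)|Q|. -/
theorem stmt3 (s r : ℝ) (hs : 0 ≤ s) (hr0 : 0 ≤ r) (hr1 : r ≤ 1)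
    (n m : Fin 3 → ℝ)
    (hn : (∑ i, n i ^ 2) = 1) (hm : (∑ i, m i ^ 2) = 1) (hnm : (∑ i, n i * m i) = 0)
    (Q : M3)
    (hrep : Q = s • (vecMulVec n n - (1/3 : ℝ) • (1 : M3)
            + r • (vecMulVec m m - (1/3 : ℝ) • (1 : M3)))) :
    frob Q ^ 2 = (2/3) * s ^ 2 * (r ^ 2 - r + 1) ∧
    (Q ≠ 0 → beta Q = 27 * r ^ 2 * (1 - r) ^ 2 / (4 * (r ^ 2 - r + 1) ^ 3)) ∧
    Real.sqrt (3/2) * frob Q ≤ s := by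
  have hn3 : n 0 ^ 2 + n 1 ^ 2 + n 2 ^ 2 = 1 := by simpa [Fin.sum_univ_three] using hn
  have hm3 : m 0 ^ 2 + m 1 ^ 2 + m 2 ^ 2 = 1 := by simpa [Fin.sum_univ_three] using hm
  have hnm3 : n 0 * m 0 + n 1 * m 1 + n 2 * m 2 = 0 := by
    simpa [Fin.sum_univ_three] using hnm
  set P : M3 := vecMulVec n n with hP
  set M : M3 := vecMulVec m m with hM
  have hPP : P * P = P := by
    ext i j
    simp only [hP, Matrix.mul_apply, vecMulVec_apply, Fin.sum_univ_three]
    linear_combination (n i * n j) * hn3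
  have hMM : M * M = M := by
    ext i j
    simp only [hM, Matrix.mul_apply, vecMulVec_apply, Fin.sum_univ_three]
    linear_combination (m i * m j) * hm3
  have hPM : P * M = 0 := by
    ext i j
    simp only [hP, hM, Matrix.mul_apply, vecMulVec_apply, Fin.sum_univ_three,
      Matrix.zero_apply]
    linear_combination (n i * m j) * hnm3
  have hMP : M * P = 0 := by
    ext i j
    simp only [hP, hM, Matrix.mul_apply, vecMulVec_apply, Fin.sum_univ_three,
      Matrix.zero_apply]
    linear_combination (n j * m i) * hnm3
  have hTrP : P.trace = 1 := by
    simp only [hP, Matrix.trace, Matrix.diag, vecMulVec_apply, Fin.sum_univ_three]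
    linear_combination hn3
  have hTrM : M.trace = 1 := by
    simp only [hM, Matrix.trace, Matrix.diag, vecMulVec_apply, Fin.sum_univ_three]
    linear_combination hm3
  have hQ : Q = s • P + (s * r) • M + (-(s * (1 + r) / 3)) • (1 : M3) := by
    rw [hrep]; module
  have hQ2 : Q * Q = (s ^ 2 * (1 - 2 * (1 + r) / 3)) • P
      + (s ^ 2 * (r ^ 2 - 2 * r * (1 + r) / 3)) • M
      + ((s * (1 + r) / 3) ^ 2) • (1 : M3) := by
    rw [hQ]
    simp only [add_mul, mul_add, smul_mul_assoc, mul_smul_comm, hPP, hMM, hPM, hMP,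
      mul_one, one_mul, smul_zero, add_zero, zero_add, smul_smul]
    module
  have hQ3 : Q * Q * Q = (s ^ 3 * ((1 - (1 + r) / 3) ^ 3 + ((1 + r) / 3) ^ 3)) • P
      + (s ^ 3 * ((r - (1 + r) / 3) ^ 3 + ((1 + r) / 3) ^ 3)) • M
      + (-(s * (1 + r) / 3) ^ 3) • (1 : M3) := by
    rw [hQ2, hQ]
    simp only [add_mul, mul_add, smul_mul_assoc, mul_smul_comm, hPP, hMM, hPM, hMP,
      mul_one, one_mul, smul_zero, add_zero, zero_add, smul_smul]
    module
  have htr1 : (1 : M3).trace = 3 := by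
    simp [Matrix.trace_one]
  have t2 : (Q * Q).trace = (2/3) * s ^ 2 * (r ^ 2 - r + 1) := by
    rw [hQ2]
    simp only [Matrix.trace_add, Matrix.trace_smul, hTrP, hTrM, htr1, smul_eq_mul]
    ring
  have t3 : (Q * Q * Q).trace = s ^ 3 * (2 * r ^ 3 - 3 * r ^ 2 - 3 * r + 2) / 9 := by
    rw [hQ3]
    simp only [Matrix.trace_add, Matrix.trace_smul, hTrP, hTrM, htr1, smul_eq_mul]
    ring
  have hsym : ∀ i j, Q i j = Q j i := by
    intro i j
    rw [hrep, hP, hM]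
    by_cases h : i = j
    · subst h; rfl
    · simp only [Matrix.add_apply, Matrix.sub_apply, Matrix.smul_apply, vecMulVec_apply,
        Matrix.one_apply_ne h, Matrix.one_apply_ne (Ne.symm h), smul_eq_mul]
      ring
  have hsum : (∑ i, ∑ j, (Q i j) ^ 2) = (Q * Q).trace := by
    simp only [Matrix.trace, Matrix.diag, Matrix.mul_apply]
    refine Finset.sum_congr rfl fun i _ => Finset.sum_congr rfl fun j _ => ?_
    rw [hsym i j]; ring
  have hsumnn : 0 ≤ ∑ i, ∑ j, (Q i j) ^ 2 :=
    Finset.sum_nonneg fun i _ => Finset.sum_nonneg fun j _ => sq_nonneg _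
  have hf2 : frob Q ^ 2 = (2/3) * s ^ 2 * (r ^ 2 - r + 1) := by
    rw [frob, Real.sq_sqrt hsumnn, hsum, t2]
  refine ⟨hf2, ?_, ?_⟩
  · intro hQ0
    have hsne : s ≠ 0 := by
      intro h0
      apply hQ0
      rw [hrep, h0, zero_smul]
    have hden : 0 < r ^ 2 - r + 1 := by nlinarith
    have ht2ne : (Q * Q).trace ≠ 0 := by
      rw [t2]
      positivity
    rw [beta, t2, t3]
    have hspos : (0:ℝ) < s := lt_of_le_of_ne hs (Ne.symm hsne)
    have hYne : r ^ 2 - r + 1 ≠ 0 := hden.ne'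
    rw [sub_eq_iff_eq_add, div_add_div _ _ (mul_ne_zero (by norm_num) (pow_ne_zero 3 hYne))
      (pow_ne_zero 3 (mul_ne_zero (mul_ne_zero (by norm_num) (pow_ne_zero 2 hsne)) hYne)),
      eq_div_iff (mul_ne_zero (mul_ne_zero (by norm_num) (pow_ne_zero 3 hYne))
      (pow_ne_zero 3 (mul_ne_zero (mul_ne_zero (by norm_num) (pow_ne_zero 2 hsne)) hYne)))]
    ring
  · have hfnn : 0 ≤ frob Q := Real.sqrt_nonneg _
    have hfle : (Real.sqrt (3/2) * frob Q) ^ 2 ≤ s ^ 2 := by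
      rw [mul_pow, Real.sq_sqrt (by norm_num : (0:ℝ) ≤ 3/2), hf2]
      nlinarith [mul_nonneg (mul_nonneg (sq_nonneg s) hr0) (sub_nonneg.2 hr1)]
    have hxnn : 0 ≤ Real.sqrt (3/2) * frob Q := by positivity
    calc Real.sqrt (3/2) * frob Q = Real.sqrt ((Real.sqrt (3/2) * frob Q) ^ 2) :=
          (Real.sqrt_sq hxnn).symm
      _ ≤ Real.sqrt (s ^ 2) := Real.sqrt_le_sqrt hfle
      _ = s := Real.sqrt_sq hs
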